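/- There exists a finite constant C (depending only on m and r̃_1,…,r̃_m) such that for all 0 ≤ t ≤ t' < ∞ and all x ∈ ℤ: p_t(x) ≤ e^{C (t'−t)} p_{t'}(x). -/

import Mathlib

open Finset

/-- `φ(θ) := Σ_{k=1}^m r̃_k (1 − cos(kθ))`. -/
noncomputable def phiFn (m : ℕ) (r : ℕ → ℝ) (θ : ℝ) : ℝ :=
  ∑ k ∈ Finset.Icc 1 m, r k * (1 - Real.cos (k * θ))

/-- The semi-discrete heat kernel
`p_t(x) := (2π)⁻¹ ∫_{−π}^{π} e^{−ixθ} e^{−tφ(θ)} dθ`, a real number since `φ` is even. -/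
noncomputable def hk (m : ℕ) (r : ℕ → ℝ) (t : ℝ) (x : ℤ) : ℝ :=
  ((2 * (Real.pi : ℂ))⁻¹ * ∫ θ in (-Real.pi)..Real.pi,
      Complex.exp (-(x : ℂ) * Complex.I * (θ : ℂ)) *
        Complex.exp (-(t : ℂ) * ((phiFn m r θ : ℝ) : ℂ))).re

namespace Stmt6Aux

open Real MeasureTheory

noncomputable def psiFn (m : ℕ) (r : ℕ → ℝ) (θ : ℝ) : ℝ :=
  ∑ k ∈ Finset.Icc 1 m, r k * Real.cos (k * θ)

noncomputable def cN (m : ℕ) (r : ℕ → ℝ) (n : ℕ) (x : ℤ) : ℝ :=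
  ∫ θ in (-π)..π, Real.cos (x * θ) * (psiFn m r θ) ^ n

lemma cont_psi (m : ℕ) (r : ℕ → ℝ) : Continuous (psiFn m r) := by
  unfold psiFn
  exact continuous_finset_sum _ fun k _ =>
    continuous_const.mul (Real.continuous_cos.comp (continuous_const.mul continuous_id))

lemma cont_cosmul (m : ℕ) (r : ℕ → ℝ) (c : ℝ) (n : ℕ) :
    Continuous fun θ : ℝ => Real.cos (c * θ) * psiFn m r θ ^ n :=
  (Real.continuous_cos.comp (continuous_const.mul continuous_id)).mul ((cont_psi m r).pow n)

lemma psi_abs (m : ℕ) (r : ℕ → ℝ) (hr : ∀ k ∈ Finset.Icc 1 m, 0 ≤ r k) (θ : ℝ) :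
    |psiFn m r θ| ≤ ∑ k ∈ Finset.Icc 1 m, r k := by
  refine (Finset.abs_sum_le_sum_abs _ _).trans (Finset.sum_le_sum fun k hk => ?_)
  rw [abs_mul, abs_of_nonneg (hr k hk)]
  calc r k * |Real.cos (k * θ)| ≤ r k * 1 :=
        mul_le_mul_of_nonneg_left (Real.abs_cos_le_one _) (hr k hk)
    _ = r k := mul_one _

lemma cN_zero_nonneg (m : ℕ) (r : ℕ → ℝ) (x : ℤ) : 0 ≤ cN m r 0 x := by
  unfold cN
  simp only [pow_zero, mul_one]
  rcases eq_or_ne x 0 with hx | hx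
  · simp [hx, Real.pi_nonneg]
  · have hx' : (x : ℝ) ≠ 0 := Int.cast_ne_zero.mpr hx
    have : (∫ θ in (-π)..π, Real.cos ((x : ℝ) * θ)) =
        (x : ℝ)⁻¹ • ∫ θ in ((x:ℝ) * (-π))..((x:ℝ) * π), Real.cos θ :=
      intervalIntegral.integral_comp_mul_left _ hx'
    rw [this, integral_cos]
    have h1 : Real.sin ((x : ℝ) * π) = 0 := Real.sin_int_mul_pi x
    have h2 : Real.sin ((x : ℝ) * (-π)) = 0 := by
      rw [mul_neg, Real.sin_neg, h1, neg_zero]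
    rw [h1, h2]
    simp

lemma cN_succ (m : ℕ) (r : ℕ → ℝ) (n : ℕ) (x : ℤ) :
    cN m r (n + 1) x =
      ∑ k ∈ Finset.Icc 1 m, r k * ((cN m r n (x - k) + cN m r n (x + k)) / 2) := by
  unfold cN
  calc (∫ θ in (-π)..π, Real.cos (x * θ) * psiFn m r θ ^ (n + 1))
      = ∫ θ in (-π)..π, ∑ k ∈ Finset.Icc 1 m,
          (r k / 2) * (Real.cos (((x - k : ℤ)) * θ) * psiFn m r θ ^ n +
            Real.cos (((x + k : ℤ)) * θ) * psiFn m r θ ^ n) := by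
        refine intervalIntegral.integral_congr fun θ _ => ?_
        have hψ : psiFn m r θ = ∑ k ∈ Finset.Icc 1 m, r k * Real.cos (k * θ) := rfl
        rw [pow_succ', hψ, Finset.sum_mul, Finset.mul_sum]
        refine Finset.sum_congr rfl fun k _ => ?_
        have h1 : ((x - (k : ℤ) : ℤ) : ℝ) * θ = (x : ℝ) * θ - (k : ℝ) * θ := by push_cast; ring
        have h2 : ((x + (k : ℤ) : ℤ) : ℝ) * θ = (x : ℝ) * θ + (k : ℝ) * θ := by push_cast; ring
        rw [h1, h2, Real.cos_sub, Real.cos_add]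
        ring
    _ = ∑ k ∈ Finset.Icc 1 m, ∫ θ in (-π)..π,
          (r k / 2) * (Real.cos (((x - k : ℤ)) * θ) * psiFn m r θ ^ n +
            Real.cos (((x + k : ℤ)) * θ) * psiFn m r θ ^ n) := by
        refine intervalIntegral.integral_finset_sum fun k _ => ?_
        exact (continuous_const.mul ((cont_cosmul m r _ n).add (cont_cosmul m r _ n))).intervalIntegrable _ _
    _ = ∑ k ∈ Finset.Icc 1 m, r k * ((cN m r n (x - k) + cN m r n (x + k)) / 2) := by
        refine Finset.sum_congr rfl fun k _ => ?_
        rw [intervalIntegral.integral_const_mul,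
          intervalIntegral.integral_add ((cont_cosmul m r _ n).intervalIntegrable _ _)
            ((cont_cosmul m r _ n).intervalIntegrable _ _)]
        unfold cN
        push_cast
        ring

lemma cN_nonneg (m : ℕ) (r : ℕ → ℝ) (hr : ∀ k ∈ Finset.Icc 1 m, 0 ≤ r k) :
    ∀ (n : ℕ) (x : ℤ), 0 ≤ cN m r n x := by
  intro n
  induction n with
  | zero => exact cN_zero_nonneg m r
  | succ n ih =>
    intro x
    rw [cN_succ]
    exact Finset.sum_nonneg fun k hk => mul_nonneg (hr k hk)
      (div_nonneg (add_nonneg (ih _) (ih _)) two_pos.le)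

lemma cN_abs (m : ℕ) (r : ℕ → ℝ) (hr : ∀ k ∈ Finset.Icc 1 m, 0 ≤ r k) (n : ℕ) (x : ℤ) :
    |cN m r n x| ≤ 2 * π * (∑ k ∈ Finset.Icc 1 m, r k) ^ n := by
  have h : ‖∫ θ in (-π)..π, Real.cos (x * θ) * psiFn m r θ ^ n‖ ≤
      (∑ k ∈ Finset.Icc 1 m, r k) ^ n * |π - (-π)| := by
    refine intervalIntegral.norm_integral_le_of_norm_le_const fun θ _ => ?_
    rw [Real.norm_eq_abs, abs_mul, abs_pow]
    calc |Real.cos ((x : ℝ) * θ)| * |psiFn m r θ| ^ n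
        ≤ 1 * (∑ k ∈ Finset.Icc 1 m, r k) ^ n := by
          exact mul_le_mul (Real.abs_cos_le_one _)
            (pow_le_pow_left₀ (abs_nonneg _) (psi_abs m r hr θ) n)
            (pow_nonneg (abs_nonneg _) n) zero_le_one
      _ = (∑ k ∈ Finset.Icc 1 m, r k) ^ n := one_mul _
  have hpi : |π - (-π)| = 2 * π := by
    rw [sub_neg_eq_add, abs_of_nonneg (by linarith [Real.pi_pos])]
    ring
  rw [hpi] at h
  calc |cN m r n x| ≤ (∑ k ∈ Finset.Icc 1 m, r k) ^ n * (2 * π) := h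
    _ = 2 * π * (∑ k ∈ Finset.Icc 1 m, r k) ^ n := by ring

lemma summable_terms (m : ℕ) (r : ℕ → ℝ) (hr : ∀ k ∈ Finset.Icc 1 m, 0 ≤ r k)
    (t : ℝ) (ht : 0 ≤ t) (x : ℤ) :
    Summable fun n : ℕ => t ^ n / n.factorial * cN m r n x := by
  set R := ∑ k ∈ Finset.Icc 1 m, r k with hR
  refine Summable.of_nonneg_of_le
    (fun n => mul_nonneg (div_nonneg (pow_nonneg ht n) (Nat.cast_nonneg _))
      (cN_nonneg m r hr n x))
    (fun n => ?_) ((Real.summable_pow_div_factorial (t * R)).mul_left (2 * π))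
  calc t ^ n / n.factorial * cN m r n x
      ≤ t ^ n / n.factorial * (2 * π * R ^ n) := by
        refine mul_le_mul_of_nonneg_left ?_
          (div_nonneg (pow_nonneg ht n) (Nat.cast_nonneg _))
        exact (le_abs_self _).trans (cN_abs m r hr n x)
    _ = 2 * π * ((t * R) ^ n / n.factorial) := by rw [mul_pow]; ring

lemma exp_expansion (m : ℕ) (r : ℕ → ℝ) (hr : ∀ k ∈ Finset.Icc 1 m, 0 ≤ r k)
    (t : ℝ) (ht : 0 ≤ t) (x : ℤ) :
    (∫ θ in (-π)..π, Real.cos (x * θ) * Real.exp (t * psiFn m r θ)) =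
      ∑' n : ℕ, t ^ n / n.factorial * cN m r n x := by
  set R := ∑ k ∈ Finset.Icc 1 m, r k with hR
  have hle : -π ≤ π := by linarith [Real.pi_pos]
  set F : ℕ → ℝ → ℝ := fun n θ => t ^ n / n.factorial * (Real.cos (x * θ) * psiFn m r θ ^ n)
    with hF
  have hFcont : ∀ n, Continuous (F n) := fun n => continuous_const.mul (cont_cosmul m r _ n)
  have hint : ∀ n : ℕ, IntegrableOn (F n) (Set.Ioc (-π) π) :=
    fun n => (hFcont n).integrableOn_Ioc
  have hsum : Summable fun n : ℕ => ∫ θ in Set.Ioc (-π) π, ‖F n θ‖ := by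
    refine Summable.of_nonneg_of_le
      (fun n => MeasureTheory.integral_nonneg fun θ => norm_nonneg _)
      (fun n => ?_) ((Real.summable_pow_div_factorial (t * R)).mul_left (2 * π))
    have hbd : ∀ θ ∈ Set.Ioc (-π) π, ‖F n θ‖ ≤ t ^ n / n.factorial * R ^ n := by
      intro θ _
      rw [hF, Real.norm_eq_abs, abs_mul, abs_mul, abs_pow,
        abs_of_nonneg (div_nonneg (pow_nonneg ht n) (Nat.cast_nonneg _))]
      refine mul_le_mul_of_nonneg_left ?_
        (div_nonneg (pow_nonneg ht n) (Nat.cast_nonneg _))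
      calc |Real.cos ((x : ℝ) * θ)| * |psiFn m r θ| ^ n
          ≤ 1 * R ^ n := mul_le_mul (Real.abs_cos_le_one _)
            (pow_le_pow_left₀ (abs_nonneg _) (psi_abs m r hr θ) n)
            (pow_nonneg (abs_nonneg _) n) zero_le_one
        _ = R ^ n := one_mul _
    calc (∫ θ in Set.Ioc (-π) π, ‖F n θ‖)
        ≤ ∫ _θ in Set.Ioc (-π) π, t ^ n / n.factorial * R ^ n := by
          refine MeasureTheory.setIntegral_mono_on (hint n).norm
            (MeasureTheory.integrableOn_const measure_Ioc_lt_top.ne)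
            measurableSet_Ioc hbd
      _ = 2 * π * ((t * R) ^ n / n.factorial) := by
          rw [MeasureTheory.setIntegral_const, Real.volume_real_Ioc_of_le hle, smul_eq_mul]
          rw [mul_pow]
          ring
  have key : ∑' n : ℕ, (∫ θ in Set.Ioc (-π) π, F n θ) =
      ∫ θ in Set.Ioc (-π) π, ∑' n : ℕ, F n θ :=
    MeasureTheory.integral_tsum_of_summable_integral_norm hint hsum
  have hpt : ∀ θ : ℝ, (∑' n : ℕ, F n θ) = Real.cos (x * θ) * Real.exp (t * psiFn m r θ) := by
    intro θ
    have : Real.exp (t * psiFn m r θ) = ∑' n : ℕ, (t * psiFn m r θ) ^ n / n.factorial := by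
      rw [Real.exp_eq_exp_ℝ, NormedSpace.exp_eq_tsum_div]
    rw [this, ← tsum_mul_left]
    refine tsum_congr fun n => ?_
    rw [hF, mul_pow]
    ring
  rw [intervalIntegral.integral_of_le hle]
  calc (∫ θ in Set.Ioc (-π) π, Real.cos (x * θ) * Real.exp (t * psiFn m r θ))
      = ∫ θ in Set.Ioc (-π) π, ∑' n : ℕ, F n θ := by
        refine MeasureTheory.setIntegral_congr_fun measurableSet_Ioc fun θ _ => (hpt θ).symm
    _ = ∑' n : ℕ, (∫ θ in Set.Ioc (-π) π, F n θ) := key.symm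
    _ = ∑' n : ℕ, t ^ n / n.factorial * cN m r n x := by
        refine tsum_congr fun n => ?_
        rw [hF]
        rw [MeasureTheory.integral_const_mul]
        congr 1
        rw [cN, intervalIntegral.integral_of_le hle]

lemma P_mono (m : ℕ) (r : ℕ → ℝ) (hr : ∀ k ∈ Finset.Icc 1 m, 0 ≤ r k)
    (t t' : ℝ) (ht : 0 ≤ t) (htt' : t ≤ t') (x : ℤ) :
    (∫ θ in (-π)..π, Real.cos (x * θ) * Real.exp (t * psiFn m r θ)) ≤
      ∫ θ in (-π)..π, Real.cos (x * θ) * Real.exp (t' * psiFn m r θ) := by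
  rw [exp_expansion m r hr t ht x, exp_expansion m r hr t' (ht.trans htt') x]
  refine Summable.tsum_le_tsum (fun n => ?_) (summable_terms m r hr t ht x)
    (summable_terms m r hr t' (ht.trans htt') x)
  have := cN_nonneg m r hr n x
  gcongr

lemma cont_phi (m : ℕ) (r : ℕ → ℝ) : Continuous (phiFn m r) := by
  unfold phiFn
  exact continuous_finset_sum _ fun k _ => continuous_const.mul
    (continuous_const.sub (Real.continuous_cos.comp (continuous_const.mul continuous_id)))

lemma phi_eq (m : ℕ) (r : ℕ → ℝ) (θ : ℝ) :
    phiFn m r θ = (∑ k ∈ Finset.Icc 1 m, r k) - psiFn m r θ := by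
  unfold phiFn psiFn
  rw [← Finset.sum_sub_distrib]
  exact Finset.sum_congr rfl fun k _ => by ring

lemma hk_eq (m : ℕ) (r : ℕ → ℝ) (t : ℝ) (x : ℤ) :
    hk m r t x = (2 * π)⁻¹ * (Real.exp (-(t * ∑ k ∈ Finset.Icc 1 m, r k)) *
      ∫ θ in (-π)..π, Real.cos (x * θ) * Real.exp (t * psiFn m r θ)) := by
  set R := ∑ k ∈ Finset.Icc 1 m, r k with hR
  set z : ℝ → ℂ := fun θ => Complex.exp (-(x : ℂ) * Complex.I * (θ : ℂ)) *
      Complex.exp (-(t : ℂ) * ((phiFn m r θ : ℝ) : ℂ)) with hzdef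
  have hz : ∀ θ : ℝ, z θ = Complex.exp (((-((x : ℝ) * θ) : ℝ) : ℂ) * Complex.I) *
        ((Real.exp (-(t * phiFn m r θ)) : ℝ) : ℂ) := by
    intro θ
    rw [hzdef]
    simp only
    rw [Complex.ofReal_exp]
    congr 2
    · push_cast; ring
    · push_cast; ring
  have hcont : Continuous z := by
    refine Continuous.mul (Complex.continuous_exp.comp ?_) (Complex.continuous_exp.comp ?_)
    · exact continuous_const.mul Complex.continuous_ofReal
    · exact continuous_const.mul (Complex.continuous_ofReal.comp (cont_phi m r))
  have h2π : ((2 : ℂ) * (π : ℂ))⁻¹ = (((2 * π)⁻¹ : ℝ) : ℂ) := by push_cast; ring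
  have hre : (∫ θ in (-π)..π, z θ).re = ∫ θ in (-π)..π, (z θ).re := by
    exact (Complex.reCLM.intervalIntegral_comp_comm
      (hcont.intervalIntegrable (-π) π)).symm
  unfold hk
  rw [h2π, Complex.re_ofReal_mul]
  congr 1
  rw [show (∫ θ in (-π)..π, Complex.exp (-(x : ℂ) * Complex.I * (θ : ℂ)) *
        Complex.exp (-(t : ℂ) * ((phiFn m r θ : ℝ) : ℂ))) = ∫ θ in (-π)..π, z θ from rfl,
    hre]
  calc (∫ θ in (-π)..π, (z θ).re)
      = ∫ θ in (-π)..π, Real.exp (-(t * R)) *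
          (Real.cos (x * θ) * Real.exp (t * psiFn m r θ)) := by
        refine intervalIntegral.integral_congr fun θ _ => ?_
        rw [hz θ]
        simp only [Complex.mul_re, Complex.ofReal_re, Complex.ofReal_im, mul_zero, sub_zero,
          Complex.exp_ofReal_mul_I_re]
        rw [Real.cos_neg, phi_eq m r θ, show -(t * (R - psiFn m r θ)) = -(t * R) + t * psiFn m r θ
          from by ring, Real.exp_add]
        ring
    _ = Real.exp (-(t * R)) * ∫ θ in (-π)..π, Real.cos (x * θ) * Real.exp (t * psiFn m r θ) :=
        intervalIntegral.integral_const_mul _ _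

end Stmt6Aux

theorem stmt6 (m : ℕ) (hm : 1 ≤ m) (r : ℕ → ℝ) (hr : ∀ k ∈ Finset.Icc 1 m, 0 < r k) :
    ∃ C : ℝ, ∀ t t' : ℝ, 0 ≤ t → t ≤ t' → ∀ x : ℤ,
      hk m r t x ≤ Real.exp (C * (t' - t)) * hk m r t' x := by
  refine ⟨∑ k ∈ Finset.Icc 1 m, r k, fun t t' ht htt' x => ?_⟩
  have hr' : ∀ k ∈ Finset.Icc 1 m, 0 ≤ r k := fun k hk => (hr k hk).le
  rw [Stmt6Aux.hk_eq, Stmt6Aux.hk_eq]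
  set R := ∑ k ∈ Finset.Icc 1 m, r k with hR
  have hP := Stmt6Aux.P_mono m r hr' t t' ht htt' x
  have hE : Real.exp (R * (t' - t)) * Real.exp (-(t' * R)) = Real.exp (-(t * R)) := by
    rw [← Real.exp_add]; ring_nf
  have hpi : (0:ℝ) ≤ (2 * Real.pi)⁻¹ := by positivity
  calc (2 * Real.pi)⁻¹ * (Real.exp (-(t * R)) *
        ∫ θ in (-Real.pi)..Real.pi, Real.cos (x * θ) * Real.exp (t * Stmt6Aux.psiFn m r θ))
      ≤ (2 * Real.pi)⁻¹ * (Real.exp (-(t * R)) *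
        ∫ θ in (-Real.pi)..Real.pi, Real.cos (x * θ) * Real.exp (t' * Stmt6Aux.psiFn m r θ)) := by
        refine mul_le_mul_of_nonneg_left (mul_le_mul_of_nonneg_left hP (Real.exp_nonneg _)) hpi
    _ = Real.exp (R * (t' - t)) * ((2 * Real.pi)⁻¹ * (Real.exp (-(t' * R)) *
        ∫ θ in (-Real.pi)..Real.pi, Real.cos (x * θ) * Real.exp (t' * Stmt6Aux.psiFn m r θ))) := by
        rw [← hE]; ring
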